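/- If a normal modal logic L is finitely characterizable, then L is locally tabular. -/
import Mathlib


/-- Modal formulas in negation normal form over propositional variables indexed by `ℕ`.
`var p` is the propositional variable `p`; `nvar p` is the negated literal `¬ p`. -/
inductive MF : Type
  | var  : ℕ → MF
  | nvar : ℕ → MF
  | top  : MF
  | bot  : MF
  | and  : MF → MF → MF
  | or   : MF → MF → MF
  | dia  : MF → MF
  | box  : MF → MF

/-- Labels for the connectives `∧, ∨, ◇, □, ⊤, ⊥`. -/
inductive Conn : Type
  | conj | disj | dia | box | top | bot

/-- The set of connectives occurring in a modal formula. -/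
def MF.conns : MF → Set Conn
  | .var _ => ∅
  | .nvar _ => ∅
  | .top => {Conn.top}
  | .bot => {Conn.bot}
  | .and φ ψ => φ.conns ∪ ψ.conns ∪ {Conn.conj}
  | .or φ ψ => φ.conns ∪ ψ.conns ∪ {Conn.disj}
  | .dia φ => φ.conns ∪ {Conn.dia}
  | .box φ => φ.conns ∪ {Conn.box}

/-- The set of propositional variables occurring positively (unnegated) in a formula. -/
def MF.pvars : MF → Set ℕ
  | .var p => {p}
  | .nvar _ => ∅
  | .top => ∅
  | .bot => ∅
  | .and φ ψ => φ.pvars ∪ ψ.pvars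
  | .or φ ψ => φ.pvars ∪ ψ.pvars
  | .dia φ => φ.pvars
  | .box φ => φ.pvars

/-- The set of propositional variables occurring negatively (negated) in a formula. -/
def MF.nvars : MF → Set ℕ
  | .var _ => ∅
  | .nvar p => {p}
  | .top => ∅
  | .bot => ∅
  | .and φ ψ => φ.nvars ∪ ψ.nvars
  | .or φ ψ => φ.nvars ∪ ψ.nvars
  | .dia φ => φ.nvars
  | .box φ => φ.nvars

/-- The set of propositional variables occurring in a formula. -/
def MF.vars (φ : MF) : Set ℕ := φ.pvars ∪ φ.nvars

/-- `φ ∈ L_C[P]`: the formula `φ` (in negation normal form, built from literals) uses only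
connectives from `C` and variables from `P`. -/
def inLang (C : Set Conn) (P : Set ℕ) (φ : MF) : Prop := φ.conns ⊆ C ∧ φ.vars ⊆ P

/-- A formula is positive if no propositional variable occurs negated in it. -/
def Positive (φ : MF) : Prop := φ.nvars = ∅

/-- A formula is negative if every propositional variable occurs only negated in it. -/
def Negative (φ : MF) : Prop := φ.pvars = ∅

/-- `φ ∈ L⁺_C[P]`: positive fragment. -/
def inPosLang (C : Set Conn) (P : Set ℕ) (φ : MF) : Prop := inLang C P φ ∧ Positive φ

/-- `φ ∈ L⁻_C[P]`: negative fragment. -/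
def inNegLang (C : Set Conn) (P : Set ℕ) (φ : MF) : Prop := inLang C P φ ∧ Negative φ

/-- A Kripke model: a set of worlds, an accessibility relation, and a valuation. -/
structure KModel : Type 1 where
  W : Type
  R : W → W → Prop
  V : ℕ → Set W

/-- A pointed Kripke model. -/
structure PModel : Type 1 where
  M : KModel
  s : M.W

/-- Satisfaction of a modal formula at a world of a Kripke model. -/
def KModel.sat (M : KModel) : M.W → MF → Prop
  | s, .var p => s ∈ M.V p
  | s, .nvar p => s ∉ M.V p
  | _, .top => True
  | _, .bot => False
  | s, .and φ ψ => M.sat s φ ∧ M.sat s ψ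
  | s, .or φ ψ => M.sat s φ ∨ M.sat s ψ
  | s, .dia φ => ∃ t, M.R s t ∧ M.sat t φ
  | s, .box φ => ∀ t, M.R s t → M.sat t φ

/-- Satisfaction in a pointed model. -/
def PModel.sat (e : PModel) (φ : MF) : Prop := e.M.sat e.s φ

/-- A pointed model is finite if its set of worlds is finite. -/
def PModel.finite (e : PModel) : Prop := Finite e.M.W

/-- `φ` fits the pair of example sets `(Epos, Eneg)`. -/
def Fits (φ : MF) (Epos Eneg : Set PModel) : Prop :=
  (∀ e ∈ Epos, e.sat φ) ∧ (∀ e ∈ Eneg, ¬ e.sat φ)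

/-- Semantic equivalence of modal formulas. -/
def EquivF (φ ψ : MF) : Prop := ∀ e : PModel, e.sat φ ↔ e.sat ψ

/-- Semantic entailment of modal formulas. -/
def Entails (φ ψ : MF) : Prop := ∀ e : PModel, e.sat φ → e.sat ψ

/-- `(Epos, Eneg)` is a finite characterization of `φ` with respect to the set `L` of
formulas: both sets are finite, consist of finite pointed models, `φ` fits them, and every
`ψ ∈ L` fitting them is semantically equivalent to `φ`. -/
def FinChar (L : Set MF) (φ : MF) (Epos Eneg : Set PModel) : Prop :=
  Epos.Finite ∧ Eneg.Finite ∧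
  (∀ e ∈ Epos, e.finite) ∧ (∀ e ∈ Eneg, e.finite) ∧
  Fits φ Epos Eneg ∧
  ∀ ψ ∈ L, Fits ψ Epos Eneg → EquivF φ ψ

/-- Modal formulas with the connectives `¬`, `∧`, `□` (over variables indexed by `ℕ`). -/
inductive BF : Type
  | var : ℕ → BF
  | neg : BF → BF
  | and : BF → BF → BF
  | box : BF → BF

/-- Implication, as the usual abbreviation. -/
def BF.imp (φ ψ : BF) : BF := .neg (.and φ (.neg ψ))

/-- Bi-implication, as the usual abbreviation. -/
def BF.biImp (φ ψ : BF) : BF := .and (φ.imp ψ) (ψ.imp φ)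

/-- The set of propositional variables occurring in a formula. -/
def BF.vars : BF → Set ℕ
  | .var n => {n}
  | .neg φ => φ.vars
  | .and φ ψ => φ.vars ∪ ψ.vars
  | .box φ => φ.vars

/-- Uniform substitution of formulas for propositional variables. -/
def BF.subst (σ : ℕ → BF) : BF → BF
  | .var n => σ n
  | .neg φ => .neg (φ.subst σ)
  | .and φ ψ => .and (φ.subst σ) (ψ.subst σ)
  | .box φ => .box (φ.subst σ)

/-- Propositional evaluation of a formula under a truth assignment `v`, treating
propositional variables and boxed formulas as atoms. -/
def BF.evalP (v : BF → Prop) : BF → Prop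
  | .var n => v (.var n)
  | .box φ => v (.box φ)
  | .neg φ => ¬ φ.evalP v
  | .and φ ψ => φ.evalP v ∧ ψ.evalP v

/-- A propositional tautology (in the modal language). -/
def BF.Tautology (φ : BF) : Prop := ∀ v, φ.evalP v

/-- Satisfaction of a `BF`-formula at a world of a Kripke model. -/
def KModel.bsat (M : KModel) : M.W → BF → Prop
  | s, .var n => s ∈ M.V n
  | s, .neg φ => ¬ M.bsat s φ
  | s, .and φ ψ => M.bsat s φ ∧ M.bsat s ψ
  | s, .box φ => ∀ t, M.R s t → M.bsat t φ

/-- A normal modal logic: a set of formulas containing all propositional tautologies and all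
instances of the K-axiom, closed under modus ponens, uniform substitution and necessitation. -/
structure NormalLogic : Type 1 where
  thms : Set BF
  taut_mem : ∀ φ : BF, φ.Tautology → φ ∈ thms
  k_mem : ∀ φ ψ : BF, (BF.box (φ.imp ψ)).imp ((BF.box φ).imp (BF.box ψ)) ∈ thms
  mp : ∀ φ ψ : BF, φ.imp ψ ∈ thms → φ ∈ thms → ψ ∈ thms
  subst_mem : ∀ (φ : BF) (σ : ℕ → BF), φ ∈ thms → φ.subst σ ∈ thms
  nec : ∀ φ : BF, φ ∈ thms → BF.box φ ∈ thms

/-- `φ ≡_L ψ` iff `(φ ↔ ψ) ∈ L`. -/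
def NormalLogic.equiv (L : NormalLogic) (φ ψ : BF) : Prop := φ.biImp ψ ∈ L.thms

/-- `(W, R)` is an `L`-frame: every formula of `L` is true at every world under every
valuation on the frame. -/
def IsLFrame (L : NormalLogic) (W : Type) (R : W → W → Prop) : Prop :=
  ∀ φ ∈ L.thms, ∀ V : ℕ → Set W, ∀ w : W, KModel.bsat ⟨W, R, V⟩ w φ

/-- `φ` fits the pair of example sets `(Epos, Eneg)`. -/
def BFits (φ : BF) (Epos Eneg : Set PModel) : Prop :=
  (∀ e ∈ Epos, e.M.bsat e.s φ) ∧ (∀ e ∈ Eneg, ¬ e.M.bsat e.s φ)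

/-- `(Epos, Eneg)` is a finite characterization of `φ` with respect to the normal modal
logic `L` over the variable set `P`: both sets are finite sets of finite pointed models based
on `L`-frames, `φ` fits them, and every formula `ψ` with `ψ.vars ⊆ P` fitting them is
`L`-equivalent to `φ`. -/
def FinCharL (L : NormalLogic) (P : Set ℕ) (φ : BF) (Epos Eneg : Set PModel) : Prop :=
  Epos.Finite ∧ Eneg.Finite ∧
  (∀ e ∈ Epos, Finite e.M.W ∧ IsLFrame L e.M.W e.M.R) ∧
  (∀ e ∈ Eneg, Finite e.M.W ∧ IsLFrame L e.M.W e.M.R) ∧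
  BFits φ Epos Eneg ∧
  ∀ ψ : BF, ψ.vars ⊆ P → BFits ψ Epos Eneg → L.equiv φ ψ

/-- `L` is finitely characterizable: for every finite `P`, every formula with variables in
`P` has a finite characterization with respect to `L` over `P`. -/
def FinitelyCharacterizableL (L : NormalLogic) : Prop :=
  ∀ P : Set ℕ, P.Finite → ∀ φ : BF, φ.vars ⊆ P →
    ∃ Epos Eneg : Set PModel, FinCharL L P φ Epos Eneg

/-- `L` is locally tabular: for every finite `P` there are, up to `L`-equivalence, only
finitely many formulas with variables in `P`. -/
def LocallyTabular (L : NormalLogic) : Prop :=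
  ∀ P : Set ℕ, P.Finite →
    ∃ S : Set BF, S.Finite ∧ ∀ φ : BF, φ.vars ⊆ P → ∃ ψ ∈ S, L.equiv φ ψ

lemma NormalLogic.and_left (L : NormalLogic) {A B : BF} (hAB : BF.and A B ∈ L.thms) :
    A ∈ L.thms := by
  refine L.mp _ _ (L.taut_mem ((A.and B).imp A) ?_) hAB
  intro v
  simp only [BF.imp, BF.evalP]
  tauto

/-- If a normal modal logic `L` is finitely characterizable, then `L` is
locally tabular. -/
theorem finitelyCharacterizable_implies_locallyTabular
    (L : NormalLogic) (h : FinitelyCharacterizableL L) : LocallyTabular L := by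
  classical
  intro P hP
  set P' : Set ℕ := insert 0 P with hP'
  set τ : BF := (BF.var 0).imp (BF.var 0) with hτ
  have hτvars : τ.vars ⊆ P' := by
    simp [hτ, BF.imp, BF.vars, hP']
  obtain ⟨Epos, Eneg, hfin1, hfin2, hmods1, hmods2, hfitτ, hkey⟩ :=
    h P' (hP.insert 0) τ hτvars
  have hτsat : ∀ (M : KModel) (s : M.W), M.bsat s τ := by
    intro M s
    simp only [hτ, BF.imp, KModel.bsat]
    tauto
  have hτthm : τ ∈ L.thms := by
    refine L.taut_mem τ ?_
    intro v
    simp only [hτ, BF.imp, BF.evalP]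
    tauto
  haveI : Finite ↥Epos := hfin1.to_subtype
  haveI : ∀ e : ↥Epos, Finite e.1.M.W := fun e => (hmods1 e.1 e.2).1
  let Prof := ∀ e : ↥Epos, e.1.M.W → Bool
  let prof : BF → Prof := fun ψ e w => @decide (e.1.M.bsat w ψ) (Classical.propDecidable _)
  have main : ∀ ψ1 ψ2 : BF, ψ1.vars ⊆ P' → ψ2.vars ⊆ P' → prof ψ1 = prof ψ2 →
      L.equiv ψ1 ψ2 := by
    intro ψ1 ψ2 h1 h2 hpp
    have hiff : ∀ e ∈ Epos, ∀ w : e.M.W, e.M.bsat w ψ1 ↔ e.M.bsat w ψ2 := by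
      intro e he w
      have := congrFun (congrFun hpp ⟨e, he⟩) w
      simpa [prof, decide_eq_decide] using this
    have hfit : BFits (ψ1.biImp ψ2) Epos Eneg := by
      constructor
      · intro e he
        have hw := hiff e he e.s
        show e.M.bsat e.s (ψ1.biImp ψ2)
        simp only [BF.biImp, BF.imp, KModel.bsat]
        tauto
      · intro e he
        exact absurd (hτsat e.M e.s) (hfitτ.2 e he)
    have hvars : (ψ1.biImp ψ2).vars ⊆ P' := by
      simp only [BF.biImp, BF.imp, BF.vars]
      intro x hx
      rcases hx with (hx | hx) | (hx | hx)
      · exact h1 hx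
      · exact h2 hx
      · exact h2 hx
      · exact h1 hx
    have heq := hkey (ψ1.biImp ψ2) hvars hfit
    -- heq : τ.biImp (ψ1.biImp ψ2) ∈ L.thms
    have himp : τ.imp (ψ1.biImp ψ2) ∈ L.thms := L.and_left heq
    exact L.mp _ _ himp hτthm
  let rep : Prof → BF := fun q =>
    if hq : ∃ ψ : BF, ψ.vars ⊆ P' ∧ prof ψ = q then hq.choose else τ
  refine ⟨Set.range rep, Set.finite_range rep, ?_⟩
  intro φ hφ
  have hφ' : φ.vars ⊆ P' := hφ.trans (Set.subset_insert 0 P)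
  have hq : ∃ ψ : BF, ψ.vars ⊆ P' ∧ prof ψ = prof φ := ⟨φ, hφ', rfl⟩
  refine ⟨rep (prof φ), ⟨prof φ, rfl⟩, ?_⟩
  have hrep : rep (prof φ) = hq.choose := dif_pos hq
  rw [hrep]
  obtain ⟨hv, hp⟩ := hq.choose_spec
  exact main φ _ hφ' hv hp.symm
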